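/- For real α ≥ 1 and integer 0 ≤ ℓ ≤ ⌊α-1/2⌋, let q(t) = (1-t)^α p(t) with p(t) = Σ_{k=0}^{ℓ} C(α-1+k,k) t^k. Then the function g(t) := 1 - q(t)² satisfies: g(0) = 0 and g has a zero of order exactly ℓ+1 at t = 0 when ℓ+1 < α (i.e., g(t) = c·t^{ℓ+1} + o(t^{ℓ+1}) with c ≠ 0, equivalently the limit lim_{t→0⁺} g(t)/t^{ℓ+1} exists and is nonzero). -/

import Mathlib

open Finset Real Filter

/-- Real generalized binomial coefficient `C(α-1+k, k) = (∏_{j=0}^{k-1} (α+j)) / k!`. -/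
noncomputable def genBinomR (α : ℝ) (k : ℕ) : ℝ :=
  (∏ j ∈ range k, (α + j)) / (k.factorial : ℝ)

/-- `q(t) = (1-t)^α p(t)` with `p(t) = ∑_{k=0}^ℓ C(α-1+k,k) t^k`. -/
noncomputable def qPoly (α : ℝ) (ℓ : ℕ) (t : ℝ) : ℝ :=
  (1 - t) ^ α * ∑ k ∈ range (ℓ + 1), genBinomR α k * t ^ k

/-- Taylor remainder of `(1-t)^(-α)` at `0` of order `ℓ`. -/
noncomputable def Rrem (α : ℝ) (ℓ : ℕ) (t : ℝ) : ℝ :=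
  (1 - t) ^ (-α) - ∑ k ∈ range (ℓ + 1), genBinomR α k * t ^ k

lemma genBinomR_zero (α : ℝ) : genBinomR α 0 = 1 := by
  simp [genBinomR]

lemma genBinomR_succ (α : ℝ) (k : ℕ) :
    ((k : ℝ) + 1) * genBinomR α (k + 1) = α * genBinomR (α + 1) k := by
  have hprod : ∏ j ∈ range (k + 1), (α + j) = α * ∏ j ∈ range k, (α + 1 + j) := by
    rw [Finset.prod_range_succ']
    simp only [Nat.cast_zero, add_zero, Nat.cast_add, Nat.cast_one]
    rw [mul_comm]
    congr 1
    apply Finset.prod_congr rfl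
    intro j _
    ring
  have hfac : (Nat.factorial (k + 1) : ℝ) = ((k : ℝ) + 1) * (Nat.factorial k : ℝ) := by
    rw [Nat.factorial_succ]; push_cast; ring
  have hk1 : ((k : ℝ) + 1) ≠ 0 := by positivity
  have hfk : (Nat.factorial k : ℝ) ≠ 0 := by
    exact_mod_cast Nat.factorial_ne_zero k
  unfold genBinomR
  rw [hprod, hfac]
  field_simp

lemma hasDerivAt_rpow_base (α : ℝ) {x : ℝ} (hx : x < 1) :
    HasDerivAt (fun t : ℝ => (1 - t) ^ (-α)) (α * (1 - x) ^ (-(α + 1))) x := by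
  have h1 : HasDerivAt (fun t : ℝ => 1 - t) (-1) x := by
    simpa using (hasDerivAt_id x).const_sub 1
  have hne : (1 : ℝ) - x ≠ 0 := by linarith
  have := h1.rpow_const (p := -α) (Or.inl hne)
  convert this using 1
  ring_nf

lemma hasDerivAt_psum (α : ℝ) (n : ℕ) (x : ℝ) :
    HasDerivAt (fun t : ℝ => ∑ k ∈ range (n + 1), genBinomR α k * t ^ k)
      (∑ k ∈ range (n + 1), genBinomR α k * (k * x ^ (k - 1))) x := by
  apply HasDerivAt.fun_sum
  intro k _
  exact (hasDerivAt_pow k x).const_mul (genBinomR α k)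

lemma psum_deriv_eq (α : ℝ) (n : ℕ) (x : ℝ) :
    ∑ k ∈ range (n + 2), genBinomR α k * (k * x ^ (k - 1))
      = α * ∑ k ∈ range (n + 1), genBinomR (α + 1) k * x ^ k := by
  rw [Finset.sum_range_succ']
  simp only [Nat.cast_zero, pow_zero, mul_zero, zero_mul, add_zero]
  rw [Finset.mul_sum]
  apply Finset.sum_congr rfl
  intro k _
  have := genBinomR_succ α k
  push_cast
  calc genBinomR α (k + 1) * (((k : ℝ) + 1) * x ^ k)
      = (((k : ℝ) + 1) * genBinomR α (k + 1)) * x ^ k := by ring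
    _ = (α * genBinomR (α + 1) k) * x ^ k := by rw [this]
    _ = α * (genBinomR (α + 1) k * x ^ k) := by ring

lemma rrem_hasDerivAt (α : ℝ) (n : ℕ) {x : ℝ} (hx : x < 1) :
    HasDerivAt (Rrem α (n + 1)) (α * Rrem (α + 1) n x) x := by
  have h1 := hasDerivAt_rpow_base α hx
  have h2 := hasDerivAt_psum α (n + 1) x
  have h := h1.sub h2
  have heq : α * (1 - x) ^ (-(α + 1))
      - ∑ k ∈ range (n + 1 + 1), genBinomR α k * (k * x ^ (k - 1))
      = α * Rrem (α + 1) n x := by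
    rw [psum_deriv_eq α n x, Rrem]
    ring
  rw [heq] at h
  exact h

lemma rrem_continuousAt_zero (α : ℝ) (n : ℕ) : ContinuousAt (Rrem α n) 0 := by
  apply ContinuousAt.sub
  · have h1 : ContinuousAt (fun t : ℝ => (1 : ℝ) - t) 0 := by fun_prop
    have h2 : ContinuousAt (fun y : ℝ => y ^ (-α)) ((1 : ℝ) - 0) := by
      apply Real.continuousAt_rpow_const
      left; norm_num
    exact h2.comp h1
  · fun_prop

lemma rrem_zero (α : ℝ) (n : ℕ) : Rrem α n 0 = 0 := by
  rw [Rrem]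
  rw [Finset.sum_eq_single 0]
  · simp [genBinomR_zero]
  · intro k _ hk
    simp [zero_pow hk]
  · simp

/-- Key limit: the Taylor remainder divided by `t^(ℓ+1)` tends to `genBinomR α (ℓ+1)`. -/
lemma key (ℓ : ℕ) : ∀ α : ℝ,
    Tendsto (fun t : ℝ => Rrem α ℓ t / t ^ (ℓ + 1)) (nhdsWithin 0 (Set.Ioi 0))
      (nhds (genBinomR α (ℓ + 1))) := by
  induction ℓ with
  | zero =>
    intro α
    have hd : HasDerivAt (fun t : ℝ => (1 - t) ^ (-α)) α 0 := by
      have := hasDerivAt_rpow_base α (x := 0) (by norm_num)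
      simpa using this
    have hs := hasDerivAt_iff_tendsto_slope.mp hd
    have hmono : nhdsWithin (0:ℝ) (Set.Ioi 0) ≤ nhdsWithin 0 {(0:ℝ)}ᶜ :=
      nhdsWithin_mono 0 (fun x hx => ne_of_gt hx)
    have hs' := hs.mono_left hmono
    have hval : genBinomR α 1 = α := by
      simp [genBinomR]
    rw [hval]
    refine hs'.congr' ?_
    filter_upwards [self_mem_nhdsWithin] with t ht
    have : slope (fun t : ℝ => (1 - t) ^ (-α)) 0 t
        = ((1 - t) ^ (-α) - 1) / t := by
      rw [slope_def_field]
      simp [div_eq_mul_inv]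
    rw [this, Rrem]
    simp [genBinomR_zero]
  | succ n ih =>
    intro α
    have hstep := ih (α + 1)
    apply HasDerivAt.lhopital_zero_right_on_Ioo (a := 0) (b := 1)
      (f' := fun x => α * Rrem (α + 1) n x)
      (g' := fun x => ((n : ℝ) + 2) * x ^ (n + 1)) one_pos
    · intro x hx
      exact rrem_hasDerivAt α n hx.2
    · intro x hx
      have := hasDerivAt_pow (n + 2) x
      convert this using 1
      · rfl
      · push_cast
        simp
    · intro x hx
      have hx0 : (0:ℝ) < x := hx.1
      positivity
    · have h0 := ((rrem_continuousAt_zero α (n + 1)).continuousWithinAt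
        (s := Set.Ioi 0)).tendsto
      rwa [rrem_zero] at h0
    · have hc : ContinuousAt (fun x : ℝ => x ^ (n + 2)) 0 := by fun_prop
      have h0 : Tendsto (fun x : ℝ => x ^ (n + 2)) (nhdsWithin 0 (Set.Ioi 0))
          (nhds ((0:ℝ) ^ (n + 2))) := hc.continuousWithinAt
      simpa using h0
    · have hlim : Tendsto
          (fun x : ℝ => α / ((n : ℝ) + 2) * (Rrem (α + 1) n x / x ^ (n + 1)))
          (nhdsWithin 0 (Set.Ioi 0))
          (nhds (α / ((n : ℝ) + 2) * genBinomR (α + 1) (n + 1))) :=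
        hstep.const_mul _
      have hval : α / ((n : ℝ) + 2) * genBinomR (α + 1) (n + 1)
          = genBinomR α (n + 1 + 1) := by
        have := genBinomR_succ α (n + 1)
        have h2 : ((n : ℝ) + 1 + 1) ≠ 0 := by positivity
        push_cast at this ⊢
        field_simp
        linarith [this]
      rw [hval] at hlim
      refine hlim.congr ?_
      intro x
      rw [mul_div_mul_comm]

theorem stmt19 (α : ℝ) (hα : 1 ≤ α) (ℓ : ℕ) (hℓ : (ℓ : ℝ) ≤ α - 1/2) :
    (1 - qPoly α ℓ 0 ^ 2 = 0) ∧
      ((ℓ : ℝ) + 1 < α →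
        ∃ c : ℝ, c ≠ 0 ∧
          Tendsto (fun t : ℝ => (1 - qPoly α ℓ t ^ 2) / t ^ (ℓ + 1))
            (nhdsWithin 0 (Set.Ioi 0)) (nhds c)) := by
  have hq0 : qPoly α ℓ 0 = 1 := by
    rw [qPoly]
    rw [Finset.sum_eq_single 0]
    · simp [genBinomR_zero]
    · intro k _ hk
      simp [zero_pow hk]
    · simp
  constructor
  · rw [hq0]; ring
  · intro _
    set L := genBinomR α (ℓ + 1) with hL
    have hLpos : 0 < L := by
      rw [hL, genBinomR]
      apply div_pos
      · apply Finset.prod_pos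
        intro j _
        have : (0:ℝ) ≤ (j:ℝ) := Nat.cast_nonneg j
        linarith
      · exact_mod_cast Nat.factorial_pos (ℓ + 1)
    refine ⟨2 * L, by positivity, ?_⟩
    -- limits of the three factors
    have h1 : Tendsto (fun t : ℝ => (1 - t) ^ α) (nhdsWithin 0 (Set.Ioi 0))
        (nhds 1) := by
      have hc : ContinuousAt (fun t : ℝ => (1 - t) ^ α) 0 := by
        have h1 : ContinuousAt (fun t : ℝ => (1 : ℝ) - t) 0 := by fun_prop
        have h2 : ContinuousAt (fun y : ℝ => y ^ α) ((1 : ℝ) - 0) := by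
          apply Real.continuousAt_rpow_const
          left; norm_num
        exact h2.comp h1
      have h0 : Tendsto (fun t : ℝ => (1 - t) ^ α) (nhdsWithin 0 (Set.Ioi 0))
          (nhds ((1 - (0:ℝ)) ^ α)) := hc.continuousWithinAt
      simpa using h0
    have h2 := key ℓ α
    have h3 : Tendsto (fun t : ℝ => 1 + qPoly α ℓ t) (nhdsWithin 0 (Set.Ioi 0))
        (nhds 2) := by
      have hc : ContinuousAt (qPoly α ℓ) 0 := by
        apply ContinuousAt.mul
        · have h1 : ContinuousAt (fun t : ℝ => (1 : ℝ) - t) 0 := by fun_prop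
          have h2 : ContinuousAt (fun y : ℝ => y ^ α) ((1 : ℝ) - 0) := by
            apply Real.continuousAt_rpow_const
            left; norm_num
          exact h2.comp h1
        · fun_prop
      have hc' : ContinuousAt (fun t => 1 + qPoly α ℓ t) 0 := by fun_prop
      have h0 : Tendsto (fun t : ℝ => 1 + qPoly α ℓ t) (nhdsWithin 0 (Set.Ioi 0))
          (nhds (1 + qPoly α ℓ 0)) := hc'.continuousWithinAt
      rw [hq0] at h0
      norm_num at h0
      exact h0
    have hfull : Tendsto
        (fun t : ℝ => (1 - t) ^ α * (Rrem α ℓ t / t ^ (ℓ + 1)) * (1 + qPoly α ℓ t))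
        (nhdsWithin 0 (Set.Ioi 0)) (nhds (1 * L * 2)) := (h1.mul h2).mul h3
    have hval : (1 : ℝ) * L * 2 = 2 * L := by ring
    rw [hval] at hfull
    refine hfull.congr' ?_
    have hIoo : Set.Ioo (0:ℝ) 1 ∈ nhdsWithin (0:ℝ) (Set.Ioi 0) :=
      Ioo_mem_nhdsGT_of_mem ⟨le_refl 0, one_pos⟩
    filter_upwards [hIoo] with t ht
    have ht1 : (0:ℝ) < 1 - t := by linarith [ht.2]
    have hmul : (1 - t) ^ α * (1 - t) ^ (-α) = 1 := by
      rw [← Real.rpow_add ht1]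
      simp
    have hq : 1 - qPoly α ℓ t = (1 - t) ^ α * Rrem α ℓ t := by
      rw [Rrem, qPoly, mul_sub, hmul]
    have : 1 - qPoly α ℓ t ^ 2
        = ((1 - t) ^ α * Rrem α ℓ t) * (1 + qPoly α ℓ t) := by
      rw [← hq]; ring
    rw [this]
    ring
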